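/- Let λ ∈ ℂ with λ ≠ 0 and λ ≠ −1, and let n ≥ 1 be an integer. Then for every x ∈ [0,1], the series ∑_{k∈ℤ} e^{(2k+1)πix}/((2k+1)πi − log λ)^{n+1} converges absolutely and 𝓔_n(x;λ) = (2·n!/λ^x)·∑_{k∈ℤ} e^{(2k+1)πix}/((2k+1)πi − log λ)^{n+1}. (All denominators are nonzero since λ ≠ −1.) -/

import Mathlib

noncomputable def AEnum (lam : ℂ) : ℕ → ℂ
  | 0 => 2 / (lam + 1)
  | n + 1 =>
    (-lam * ∑ k ∈ (Finset.range (n + 1)).attach,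
        (((n + 1).choose k.1 : ℕ) : ℂ) * AEnum lam k.1) / (lam + 1)
decreasing_by exact Finset.mem_range.mp k.2

/-- The Apostol–Euler polynomial `𝓔_n(x;λ)`. -/
noncomputable def AEpoly (lam : ℂ) (n : ℕ) (x : ℂ) : ℂ :=
  ∑ k ∈ Finset.range (n + 1), ((n.choose k : ℕ) : ℂ) * AEnum lam k * x ^ (n - k)

lemma AEnum_succ (lam : ℂ) (h : lam + 1 ≠ 0) (n : ℕ) :
    (lam + 1) * AEnum lam (n + 1) =
      -lam * ∑ k ∈ Finset.range (n + 1), (((n + 1).choose k : ℕ) : ℂ) * AEnum lam k := by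
  rw [AEnum, mul_div_cancel₀ _ h]
  congr 1
  exact Finset.sum_attach _ fun k => (((n + 1).choose k : ℕ) : ℂ) * AEnum lam k

lemma AEpoly_zero (lam : ℂ) (n : ℕ) : AEpoly lam n 0 = AEnum lam n := by
  rw [AEpoly, Finset.sum_eq_single n]
  · simp
  · intro k hk hne
    rw [zero_pow (by simp at hk; omega), mul_zero]
  · intro h; exact absurd (Finset.self_mem_range_succ n) h

lemma AEpoly_one (lam : ℂ) (h : lam + 1 ≠ 0) (n : ℕ) :
    lam * AEpoly lam (n + 1) 1 = -AEnum lam (n + 1) := by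
  have h1 : AEpoly lam (n + 1) 1 =
      AEnum lam (n + 1) + ∑ k ∈ Finset.range (n + 1), (((n + 1).choose k : ℕ) : ℂ) * AEnum lam k := by
    rw [AEpoly, Finset.sum_range_succ]
    simp [add_comm]
  rw [h1]
  linear_combination AEnum_succ lam h n

lemma continuous_AEpoly (lam : ℂ) (n : ℕ) : Continuous fun x : ℂ => AEpoly lam n x := by
  unfold AEpoly
  exact continuous_finset_sum _ fun k _ => continuous_const.mul (continuous_pow _)

lemma hasDerivAt_AEpoly (lam : ℂ) (n : ℕ) (x : ℂ) :
    HasDerivAt (AEpoly lam (n + 1)) ((n + 1 : ℂ) * AEpoly lam n x) x := by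
  have h1 : HasDerivAt (AEpoly lam (n + 1))
      (∑ k ∈ Finset.range (n + 2),
        (((n + 1).choose k : ℕ) : ℂ) * AEnum lam k * (((n + 1 - k : ℕ) : ℂ) * x ^ (n - k))) x := by
    unfold AEpoly
    apply HasDerivAt.fun_sum
    intro k hk
    have := (hasDerivAt_pow (n + 1 - k) x).const_mul ((((n + 1).choose k : ℕ) : ℂ) * AEnum lam k)
    simpa [show n + 1 - k - 1 = n - k from by omega] using this
  convert h1 using 1
  rw [Finset.sum_range_succ, show n + 1 - (n + 1) = 0 from by omega]
  rw [Nat.cast_zero, zero_mul, mul_zero, add_zero, AEpoly, Finset.mul_sum]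
  apply Finset.sum_congr rfl
  intro k hk
  have hkn : k ≤ n := by simpa [Nat.lt_succ_iff] using hk
  have hc : (n.choose k : ℂ) * ((n + 1 : ℕ) : ℂ) = (((n + 1).choose k : ℕ) : ℂ) * ((n + 1 - k : ℕ) : ℂ) := by
    rw [← Nat.cast_mul, ← Nat.cast_mul, Nat.choose_mul_succ_eq]
  push_cast at hc ⊢
  linear_combination AEnum lam k * x ^ (n - k) * hc

open Complex intervalIntegral in
lemma hasDerivAt_expdiv {α : ℂ} (hα : α ≠ 0) (y : ℝ) :
    HasDerivAt (fun z : ℝ => Complex.exp (α * z) / α) (Complex.exp (α * y)) y := by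
  have h1 : HasDerivAt (fun z : ℂ => Complex.exp (α * z) / α) (Complex.exp (α * y)) (y : ℂ) := by
    have h0 : HasDerivAt (fun z : ℂ => α * z) α (y : ℂ) := by
      simpa using (hasDerivAt_id (y : ℂ)).const_mul α
    have h2 := (h0.cexp).div_const α
    simpa [mul_div_cancel_right₀ _ hα] using h2
  exact h1.comp_ofReal

open Complex intervalIntegral in
lemma J_succ (lam : ℂ) (n : ℕ) {α : ℂ} (hα : α ≠ 0) :
    ∫ x in (0:ℝ)..1, AEpoly lam (n + 1) x * Complex.exp (α * x) =
      (AEpoly lam (n + 1) 1 * Complex.exp α - AEpoly lam (n + 1) 0) / α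
        - ((n + 1 : ℂ) / α) * ∫ x in (0:ℝ)..1, AEpoly lam n x * Complex.exp (α * x) := by
  have hcont : ∀ m : ℕ, Continuous fun x : ℝ => AEpoly lam m (x : ℂ) :=
    fun m => (continuous_AEpoly lam m).comp continuous_ofReal
  have hexp : Continuous fun x : ℝ => Complex.exp (α * x) :=
    (continuous_const.mul continuous_ofReal).cexp
  have A := intervalIntegral.integral_mul_deriv_eq_deriv_mul
    (u := fun x : ℝ => AEpoly lam (n + 1) (x : ℂ))
    (u' := fun x : ℝ => (n + 1 : ℂ) * AEpoly lam n (x : ℂ))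
    (v := fun x : ℝ => Complex.exp (α * x) / α)
    (v' := fun x : ℝ => Complex.exp (α * x))
    (fun x _ => (hasDerivAt_AEpoly lam n (x : ℂ)).comp_ofReal)
    (fun x _ => hasDerivAt_expdiv hα x)
    ((continuous_const.mul (hcont n)).intervalIntegrable 0 1)
    (hexp.intervalIntegrable 0 1)
  rw [A]
  have : ∀ x : ℝ, (n + 1 : ℂ) * AEpoly lam n (x : ℂ) * (Complex.exp (α * x) / α)
      = ((n + 1 : ℂ) / α) * (AEpoly lam n (x : ℂ) * Complex.exp (α * x)) := by
    intro x; field_simp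
  simp_rw [this]
  rw [intervalIntegral.integral_const_mul]
  simp only [Complex.ofReal_one, Complex.ofReal_zero, mul_one, mul_zero, Complex.exp_zero]
  ring

open Complex intervalIntegral in
lemma J_eq (lam : ℂ) (h1 : lam + 1 ≠ 0) {α : ℂ} (hα : α ≠ 0)
    (hE : Complex.exp α = -lam) (n : ℕ) :
    ∫ x in (0:ℝ)..1, AEpoly lam n x * Complex.exp (α * x)
      = 2 * (n.factorial : ℂ) * (-1) ^ (n + 1) / α ^ (n + 1) := by
  induction n with
  | zero =>
      have h0 : ∀ x : ℂ, AEpoly lam 0 x = 2 / (lam + 1) := by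
        intro x; simp [AEpoly, AEnum]
      simp_rw [h0]
      rw [intervalIntegral.integral_const_mul, integral_exp_mul_complex hα]
      push_cast
      rw [mul_one, mul_zero, Complex.exp_zero, hE]
      field_simp
      ring
  | succ m ih =>
      rw [J_succ lam m hα, ih]
      have hb : AEpoly lam (m + 1) 1 * Complex.exp α - AEpoly lam (m + 1) 0 = 0 := by
        rw [hE, AEpoly_zero]
        linear_combination -(AEpoly_one lam h1 m)
      rw [hb]
      rw [Nat.factorial_succ]
      push_cast
      field_simp
      ring

lemma D_ne (lam : ℂ) (hlam0 : lam ≠ 0) (hlam1 : lam ≠ -1) (k : ℤ) :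
    (2 * (k : ℂ) + 1) * Real.pi * Complex.I - Complex.log lam ≠ 0 := by
  intro h
  apply hlam1
  have hl : Complex.log lam = (2 * (k : ℂ) + 1) * Real.pi * Complex.I := by linear_combination -h
  have he := Complex.exp_log hlam0
  rw [hl, show (2 * (k : ℂ) + 1) * Real.pi * Complex.I
      = Real.pi * Complex.I + (k : ℂ) * (2 * Real.pi * Complex.I) from by ring,
    Complex.exp_add, Complex.exp_int_mul_two_pi_mul_I, Complex.exp_pi_mul_I] at he
  rw [← he]; ring

lemma exp_alpha (lam : ℂ) (hlam0 : lam ≠ 0) (k : ℤ) :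
    Complex.exp (Complex.log lam - (2 * (k : ℂ) + 1) * Real.pi * Complex.I) = -lam := by
  rw [show Complex.log lam - (2 * (k : ℂ) + 1) * Real.pi * Complex.I
      = Complex.log lam + (-(Real.pi * Complex.I)) + ((-k : ℤ) : ℂ) * (2 * Real.pi * Complex.I)
      from by push_cast; ring]
  rw [Complex.exp_add, Complex.exp_add, Complex.exp_log hlam0,
    Complex.exp_int_mul_two_pi_mul_I, Complex.exp_neg, Complex.exp_pi_mul_I]
  norm_num

lemma summable_invD (lam : ℂ) (n : ℕ) :
    Summable (fun k : ℤ =>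
      1 / ‖(2 * (k : ℂ) + 1) * Real.pi * Complex.I - Complex.log lam‖ ^ (n + 2)) := by
  set t : ℝ := (Complex.log lam).im with ht_def
  have ht : |t| ≤ Real.pi :=
    abs_le.mpr ⟨(Complex.neg_pi_lt_log_im lam).le, Complex.log_im_le_pi lam⟩
  have hpi := Real.pi_gt_three
  have hg : Summable (fun k : ℤ => (1 / Real.pi ^ 2) * (1 / (k : ℝ) ^ 2)) :=
    (Real.summable_one_div_int_pow.mpr one_lt_two).mul_left _
  apply Summable.of_norm_bounded_eventually hg
  rw [Filter.eventually_cofinite]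
  apply Set.Finite.subset (Set.finite_Icc (-2 : ℤ) 2)
  intro k hk
  simp only [Set.mem_setOf_eq] at hk
  by_contra hk2
  apply hk
  have hkabs : (2 : ℝ) ≤ |(k : ℝ)| := by
    simp only [Set.mem_Icc, not_and_or, not_le] at hk2
    rw [← Int.cast_abs]
    have : (2 : ℤ) ≤ |k| := by
      rcases hk2 with h | h
      · exact le_abs.mpr (Or.inr (by omega))
      · exact le_abs.mpr (Or.inl (by omega))
    exact_mod_cast this
  -- imaginary part of D k
  have him : ((2 * (k : ℂ) + 1) * Real.pi * Complex.I - Complex.log lam).im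
      = (2 * (k : ℝ) + 1) * Real.pi - t := by
    simp [Complex.sub_im, Complex.mul_im, Complex.mul_re, Complex.add_im, Complex.add_re]; exact ht_def.symm
  set D : ℂ := (2 * (k : ℂ) + 1) * Real.pi * Complex.I - Complex.log lam with hD
  have h1 : |D.im| ≤ ‖D‖ := by exact Complex.abs_im_le_norm D
  rw [him] at h1
  have h2 : Real.pi * |(k : ℝ)| ≤ |(2 * (k : ℝ) + 1) * Real.pi - t| := by
    rcases le_or_gt 0 (k : ℝ) with hk0 | hk0
    · rw [abs_of_nonneg hk0]
      have := le_abs_self ((2 * (k : ℝ) + 1) * Real.pi - t)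
      nlinarith [abs_le.mp ht]
    · rw [abs_of_neg hk0]
      have := neg_abs_le ((2 * (k : ℝ) + 1) * Real.pi - t)
      nlinarith [abs_le.mp ht, abs_of_neg hk0, hkabs]
  have hDge : Real.pi * |(k : ℝ)| ≤ ‖D‖ := le_trans h2 h1
  have hone : (1 : ℝ) ≤ Real.pi * |(k : ℝ)| := by nlinarith
  have hpow : Real.pi ^ 2 * (k : ℝ) ^ 2 ≤ ‖D‖ ^ (n + 2) := by
    calc Real.pi ^ 2 * (k : ℝ) ^ 2 = (Real.pi * |(k : ℝ)|) ^ 2 := by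
            rw [mul_pow, sq_abs]
      _ ≤ (Real.pi * |(k : ℝ)|) ^ (n + 2) := pow_le_pow_right₀ hone (by omega)
      _ ≤ ‖D‖ ^ (n + 2) := by
            apply pow_le_pow_left₀ (by positivity) hDge _
  have hpos : (0 : ℝ) < Real.pi ^ 2 * (k : ℝ) ^ 2 := by
    have h0 : (0 : ℝ) < Real.pi * |(k : ℝ)| := lt_of_lt_of_le one_pos hone
    calc (0:ℝ) < (Real.pi * |(k : ℝ)|) ^ 2 := pow_pos h0 2
      _ = Real.pi ^ 2 * (k : ℝ) ^ 2 := by rw [mul_pow, sq_abs]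
  rw [Real.norm_eq_abs, abs_of_nonneg (by positivity)]
  calc 1 / ‖D‖ ^ (n + 2) ≤ 1 / (Real.pi ^ 2 * (k : ℝ) ^ 2) :=
        one_div_le_one_div_of_le hpos hpow
    _ = 1 / Real.pi ^ 2 * (1 / (k : ℝ) ^ 2) := by rw [one_div_mul_one_div]

noncomputable def AEg (lam : ℂ) (n : ℕ) (x : ℝ) : ℂ :=
  AEpoly lam n x * Complex.exp ((Complex.log lam - Real.pi * Complex.I) * x)

lemma AEg_continuous (lam : ℂ) (n : ℕ) : Continuous (AEg lam n) := by
  unfold AEg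
  exact ((continuous_AEpoly lam n).comp Complex.continuous_ofReal).mul
    ((continuous_const.mul Complex.continuous_ofReal).cexp)

lemma AEg_zero_eq_one (lam : ℂ) (hlam0 : lam ≠ 0) (h1 : lam + 1 ≠ 0) (n : ℕ) :
    AEg lam (n + 1) 0 = AEg lam (n + 1) 1 := by
  unfold AEg
  rw [Complex.ofReal_zero, Complex.ofReal_one, mul_zero, mul_one, Complex.exp_zero,
    Complex.exp_sub, Complex.exp_log hlam0, Complex.exp_pi_mul_I, AEpoly_zero]
  have := AEpoly_one lam h1 n
  field_simp
  linear_combination this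

open Complex in
lemma AEcoeffOn (lam : ℂ) (hlam0 : lam ≠ 0) (hlam1 : lam ≠ -1) (n : ℕ) (k : ℤ) :
    fourierCoeffOn (zero_lt_one : (0:ℝ) < 1) (AEg lam (n + 1)) k
      = 2 * ((n + 1).factorial : ℂ) /
        ((2 * (k : ℂ) + 1) * Real.pi * Complex.I - Complex.log lam) ^ (n + 2) := by
  haveI : Fact ((0:ℝ) < (1 : ℝ)) := ⟨zero_lt_one⟩
  have h1 : lam + 1 ≠ 0 := fun h => hlam1 (by linear_combination h)
  set α : ℂ := Complex.log lam - (2 * (k : ℂ) + 1) * Real.pi * Complex.I with hα_def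
  have hα : α ≠ 0 := by
    intro h
    exact D_ne lam hlam0 hlam1 k (by rw [hα_def] at h; linear_combination -h)
  have hE : Complex.exp α = -lam := exp_alpha lam hlam0 k
  rw [fourierCoeffOn_eq_integral]
  simp only [sub_zero, one_smul, smul_eq_mul, div_one]
  have key : Set.EqOn (fun x : ℝ => (fourier (-k) (x : AddCircle ((1:ℝ) - 0)) : ℂ) * AEg lam (n + 1) x)
      (fun x : ℝ => AEpoly lam (n + 1) x * Complex.exp (α * x)) (Set.uIcc 0 1) := by
    intro x _
    simp only [fourier_coe_apply, AEg]
    rw [mul_comm, mul_assoc, ← Complex.exp_add]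
    congr 2
    rw [hα_def]
    push_cast
    ring
  have hcongr := intervalIntegral.integral_congr (a := (0:ℝ)) (b := (1:ℝ)) (μ := MeasureTheory.volume) key
  refine Eq.trans hcongr ?_
  rw [J_eq lam h1 hα hE (n + 1)]
  rw [show (2 * (k : ℂ) + 1) * Real.pi * Complex.I - Complex.log lam = -α from by
    rw [hα_def]; ring]
  simp only [show n + 1 + 1 = n + 2 from rfl]
  rcases Nat.even_or_odd (n + 2) with he | ho
  · rw [he.neg_one_pow, he.neg_pow]; ring
  · rw [ho.neg_one_pow, ho.neg_pow, div_neg]; ring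

theorem apostol_euler_fourier_series (lam : ℂ) (hlam0 : lam ≠ 0) (hlam1 : lam ≠ -1)
    (n : ℕ) (hn : 1 ≤ n) (x : ℝ) (hx : x ∈ Set.Icc (0:ℝ) 1) :
    (∀ k : ℤ, (2 * (k : ℂ) + 1) * Real.pi * Complex.I - Complex.log lam ≠ 0) ∧
    Summable (fun k : ℤ => ‖Complex.exp ((2 * (k : ℂ) + 1) * Real.pi * Complex.I * x) /
        ((2 * (k : ℂ) + 1) * Real.pi * Complex.I - Complex.log lam) ^ (n + 1)‖) ∧
    AEpoly lam n x = (2 * (n.factorial : ℂ) / Complex.exp (x * Complex.log lam)) *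
        ∑' k : ℤ, Complex.exp ((2 * (k : ℂ) + 1) * Real.pi * Complex.I * x) /
          ((2 * (k : ℂ) + 1) * Real.pi * Complex.I - Complex.log lam) ^ (n + 1) := by
  haveI : Fact ((0:ℝ) < 1) := ⟨zero_lt_one⟩
  obtain ⟨m, rfl⟩ : ∃ m, n = m + 1 := ⟨n - 1, by omega⟩
  have h1 : lam + 1 ≠ 0 := fun h => hlam1 (by linear_combination h)
  have hDne := D_ne lam hlam0 hlam1
  have hnormexp : ∀ k : ℤ, ‖Complex.exp ((2 * (k : ℂ) + 1) * Real.pi * Complex.I * x)‖ = 1 := by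
    intro k
    rw [show (2 * (k : ℂ) + 1) * Real.pi * Complex.I * x
        = ((2 * (k : ℝ) + 1) * Real.pi * x : ℝ) * Complex.I from by push_cast; ring]
    rw [Complex.norm_exp_ofReal_mul_I]
  have hsumnorm : Summable (fun k : ℤ =>
      ‖Complex.exp ((2 * (k : ℂ) + 1) * Real.pi * Complex.I * x) /
        ((2 * (k : ℂ) + 1) * Real.pi * Complex.I - Complex.log lam) ^ (m + 1 + 1)‖) := by
    refine (summable_invD lam m).congr fun k => ?_
    rw [norm_div, norm_pow, hnormexp k]
  refine ⟨hDne, hsumnorm, ?_⟩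
  -- the continuous periodized function
  have hcont : Continuous (AddCircle.liftIco 1 0 (AEg lam (m + 1))) :=
    AddCircle.liftIco_zero_continuous (AEg_zero_eq_one lam hlam0 h1 m)
      (AEg_continuous lam (m + 1)).continuousOn
  set F : C(AddCircle (1:ℝ), ℂ) := ⟨AddCircle.liftIco 1 0 (AEg lam (m + 1)), hcont⟩ with hF
  have hcoeff : ∀ k : ℤ, fourierCoeff (F : AddCircle (1:ℝ) → ℂ) k
      = 2 * ((m + 1).factorial : ℂ) /
        ((2 * (k : ℂ) + 1) * Real.pi * Complex.I - Complex.log lam) ^ (m + 2) := by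
    intro k
    rw [hF, ContinuousMap.coe_mk, fourierCoeff_liftIco_eq]
    simpa only [zero_add] using AEcoeffOn lam hlam0 hlam1 m k
  have hsummable : Summable (fourierCoeff (F : AddCircle (1:ℝ) → ℂ)) := by
    refine Summable.of_norm ?_
    refine (((summable_invD lam m).mul_left (2 * ((m + 1).factorial : ℝ))).congr
      fun k => ?_)
    rw [hcoeff k, norm_div, norm_mul, norm_pow, Complex.norm_natCast]
    norm_num
    ring
  have hps := has_pointwise_sum_fourier_series_of_summable hsummable ((x : ℝ) : AddCircle (1:ℝ))
  have hFx : F ((x : ℝ) : AddCircle (1:ℝ)) = AEg lam (m + 1) x := by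
    rcases lt_or_eq_of_le hx.2 with h | h
    · rw [hF, ContinuousMap.coe_mk]
      exact AddCircle.liftIco_coe_apply (by rw [zero_add]; exact ⟨hx.1, h⟩)
    · subst h
      have hc : ((1:ℝ) : AddCircle (1:ℝ)) = ((0:ℝ) : AddCircle (1:ℝ)) := by
        rw [AddCircle.coe_period, QuotientAddGroup.mk_zero]
      rw [hc, hF, ContinuousMap.coe_mk,
        AddCircle.liftIco_coe_apply (by rw [zero_add]; exact ⟨le_refl _, zero_lt_one⟩),
        AEg_zero_eq_one lam hlam0 h1 m]
  rw [hFx] at hps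
  simp_rw [hcoeff, smul_eq_mul] at hps
  -- convert fourier to exponential
  have hfour : ∀ k : ℤ, (fourier k ((x : ℝ) : AddCircle (1:ℝ)) : ℂ)
      = Complex.exp (2 * Real.pi * Complex.I * k * x) := by
    intro k
    rw [fourier_coe_apply]
    norm_num
  simp_rw [hfour] at hps
  have hfactne : ((m + 1).factorial : ℂ) ≠ 0 := by
    exact_mod_cast Nat.cast_ne_zero.mpr (Nat.factorial_ne_zero (m + 1))
  have hps2 := hps.mul_left (Complex.exp (Real.pi * Complex.I * x) / (2 * ((m + 1).factorial : ℂ)))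
  have hterm : ∀ k : ℤ,
      Complex.exp (Real.pi * Complex.I * x) / (2 * ((m + 1).factorial : ℂ)) *
        (2 * ((m + 1).factorial : ℂ) /
          ((2 * (k : ℂ) + 1) * Real.pi * Complex.I - Complex.log lam) ^ (m + 2) *
            Complex.exp (2 * Real.pi * Complex.I * k * x))
      = Complex.exp ((2 * (k : ℂ) + 1) * Real.pi * Complex.I * x) /
          ((2 * (k : ℂ) + 1) * Real.pi * Complex.I - Complex.log lam) ^ (m + 1 + 1) := by
    intro k
    have hD := hDne k
    have hcomb : Complex.exp (Real.pi * Complex.I * x) *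
          Complex.exp (2 * Real.pi * Complex.I * k * x)
        = Complex.exp ((2 * (k : ℂ) + 1) * Real.pi * Complex.I * x) := by
      rw [← Complex.exp_add]; congr 1; ring
    rw [show m + 1 + 1 = m + 2 from rfl, ← hcomb]
    field_simp
  rw [funext hterm] at hps2
  rw [hps2.tsum_eq]
  simp only [AEg]
  have hx2 : Complex.exp (Real.pi * Complex.I * x) *
        Complex.exp ((Complex.log lam - Real.pi * Complex.I) * x)
      = Complex.exp ((x : ℂ) * Complex.log lam) := by
    rw [← Complex.exp_add]; congr 1; ring
  have he1 : Complex.exp ((x : ℂ) * Complex.log lam) ≠ 0 := Complex.exp_ne_zero _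
  have hx3 : Complex.exp ((x : ℂ) * Real.pi * Complex.I) *
      Complex.exp ((x : ℂ) * (Complex.log lam - Real.pi * Complex.I)) =
        Complex.exp ((x : ℂ) * Complex.log lam) := by rw [← Complex.exp_add]; congr 1; ring
  field_simp
  linear_combination -(AEpoly lam (m + 1) (x : ℂ)) * hx3
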